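/- There is a universal constant $C$ such that for all $l \in \mathbb{R}$ and all $z, w \in \mathbb{C}$, the kernel $K_l(z,w) = G(z,w) F(z + \bar{w} + 2l)$ satisfies $|K_l(z,w)| \le C \frac{e^{-|\operatorname{Re}(z-w)|^2/2}}{1 + |\operatorname{Im}(z-w)|}$, where $G$ is the Ginibre kernel and $F(z) = \frac{1}{\sqrt{2\pi}}\int_{-\infty}^0 e^{-(z-t)^2/2}\,dt$. -/

import Mathlib

open MeasureTheory Complex

/-- The Ginibre kernel. -/
noncomputable def Ginibre (z w : ℂ) : ℂ :=
  Complex.exp (z * (starRingEnd ℂ) w - (‖z‖ ^ 2 : ℝ) / 2 - (‖w‖ ^ 2 : ℝ) / 2)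

/-- The entire erfc-type function `F(z) = (2π)^{-1/2} ∫_{-∞}^0 e^{-(z-t)²/2} dt`. -/
noncomputable def erfcF (z : ℂ) : ℂ :=
  (Real.sqrt (2 * Real.pi) : ℂ)⁻¹ *
    ∫ t in Set.Iio (0 : ℝ), Complex.exp (-(z - (t : ℂ)) ^ 2 / 2)

/-- The erfc-kernel `K_l(z,w) = G(z,w) F(z + w̄ + 2l)`. -/
noncomputable def erfcKernel (l : ℝ) (z w : ℂ) : ℂ :=
  Ginibre z w * erfcF (z + (starRingEnd ℂ) w + 2 * l)

open Set Filter Topology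

lemma re_neg_sq_div_two (c : ℂ) (t : ℝ) :
    (-(c - (t:ℂ))^2/2).re = (c.im^2 - (c.re - t)^2)/2 := by
  simp [Complex.div_re, pow_two, Complex.mul_re, Complex.sub_re, Complex.sub_im,
    Complex.normSq_apply]

lemma norm_G (c : ℂ) (t : ℝ) :
    ‖Complex.exp (-(c - (t:ℂ))^2/2)‖ = Real.exp ((c.im^2 - (c.re - t)^2)/2) := by
  rw [Complex.norm_exp, re_neg_sq_div_two]

lemma abs_le_exp_quarter (s : ℝ) : |s| ≤ Real.exp (s^2/4) := by
  have h1 : |s| ≤ 1 + s^2/4 := by nlinarith [sq_nonneg (|s| - 2), _root_.sq_abs s]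
  have h2 := Real.add_one_le_exp (s^2/4)
  linarith

lemma bound1 (c : ℂ) (t : ℝ) :
    ‖Complex.exp (-(c - (t:ℂ))^2/2)‖
      ≤ Real.exp (c.im^2/2) * Real.exp (-(1/4) * (c.re - t)^2) := by
  rw [norm_G, ← Real.exp_add]
  apply Real.exp_le_exp.2
  nlinarith [sq_nonneg (c.re - t)]

lemma bound2 (c : ℂ) (t : ℝ) :
    ‖((c.re : ℂ) - (t:ℂ)) * Complex.exp (-(c - (t:ℂ))^2/2)‖
      ≤ Real.exp (c.im^2/2) * Real.exp (-(1/4) * (c.re - t)^2) := by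
  rw [norm_mul, norm_G]
  have h1 : ‖((c.re : ℂ) - (t:ℂ))‖ = |c.re - t| := by
    rw [← Complex.ofReal_sub, Complex.norm_real, Real.norm_eq_abs]
  rw [h1]
  have h2 := abs_le_exp_quarter (c.re - t)
  calc |c.re - t| * Real.exp ((c.im^2 - (c.re - t)^2)/2)
      ≤ Real.exp ((c.re - t)^2/4) * Real.exp ((c.im^2 - (c.re - t)^2)/2) := by
        exact mul_le_mul_of_nonneg_right h2 (Real.exp_pos _).le
    _ ≤ Real.exp (c.im^2/2) * Real.exp (-(1/4) * (c.re - t)^2) := by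
        rw [← Real.exp_add, ← Real.exp_add]
        apply Real.exp_le_exp.2
        nlinarith [sq_nonneg (c.re - t)]

lemma bound3 (c : ℂ) (t : ℝ) :
    ‖(c - (t:ℂ)) * Complex.exp (-(c - (t:ℂ))^2/2)‖
      ≤ (1 + |c.im|) * (Real.exp (c.im^2/2) * Real.exp (-(1/4) * (c.re - t)^2)) := by
  rw [norm_mul, norm_G]
  have habs : ‖c - (t:ℂ)‖ ≤ |c.re - t| + |c.im| := by
    have := Complex.norm_le_abs_re_add_abs_im (c - (t:ℂ))
    simpa [Complex.sub_re, Complex.sub_im] using this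
  have h2 := abs_le_exp_quarter (c.re - t)
  have hE : Real.exp ((c.im^2 - (c.re - t)^2)/2)
      ≤ Real.exp (c.im^2/2) * Real.exp (-(1/4) * (c.re - t)^2) := by
    rw [← Real.exp_add]; apply Real.exp_le_exp.2; nlinarith [sq_nonneg (c.re - t)]
  have hB2 : |c.re - t| * Real.exp ((c.im^2 - (c.re - t)^2)/2)
      ≤ Real.exp (c.im^2/2) * Real.exp (-(1/4) * (c.re - t)^2) := by
    have := bound2 c t
    rwa [norm_mul, norm_G, show ‖((c.re : ℂ) - (t:ℂ))‖ = |c.re - t| by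
      rw [← Complex.ofReal_sub, Complex.norm_real, Real.norm_eq_abs]] at this
  have hpos := (Real.exp_pos ((c.im^2 - (c.re - t)^2)/2)).le
  calc ‖c - (t:ℂ)‖ * Real.exp ((c.im^2 - (c.re - t)^2)/2)
      ≤ (|c.re - t| + |c.im|) * Real.exp ((c.im^2 - (c.re - t)^2)/2) :=
        mul_le_mul_of_nonneg_right habs hpos
    _ = |c.re - t| * Real.exp ((c.im^2 - (c.re - t)^2)/2)
        + |c.im| * Real.exp ((c.im^2 - (c.re - t)^2)/2) := by ring
    _ ≤ Real.exp (c.im^2/2) * Real.exp (-(1/4) * (c.re - t)^2)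
        + |c.im| * (Real.exp (c.im^2/2) * Real.exp (-(1/4) * (c.re - t)^2)) := by
        have := mul_le_mul_of_nonneg_left hE (abs_nonneg c.im)
        linarith
    _ = (1 + |c.im|) * (Real.exp (c.im^2/2) * Real.exp (-(1/4) * (c.re - t)^2)) := by ring

lemma gauss_int (a : ℝ) : Integrable (fun t : ℝ => Real.exp (-(1/4) * (a - t)^2)) :=
  (integrable_exp_neg_mul_sq (by norm_num : (0:ℝ) < 1/4)).comp_sub_left a

lemma gauss_integral_le (a : ℝ) :
    ∫ t in Iio (0:ℝ), Real.exp (-(1/4) * (a - t)^2) ≤ 4 := by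
  have h1 := setIntegral_le_integral (s := Iio (0:ℝ)) (gauss_int a)
    (ae_of_all _ fun t => (Real.exp_pos _).le)
  have h2 : (∫ t : ℝ, Real.exp (-(1/4) * (a - t)^2))
      = ∫ t : ℝ, Real.exp (-(1/4) * t^2) :=
    integral_sub_left_eq_self (fun t => Real.exp (-(1/4) * t^2)) volume a
  have h3 : (∫ t : ℝ, Real.exp (-(1/4) * t^2)) = Real.sqrt (Real.pi / (1/4)) :=
    integral_gaussian (1/4)
  have h16 : Real.pi / (1/4) ≤ 16 := by nlinarith [Real.pi_le_four]
  have h4 : Real.sqrt (Real.pi / (1/4)) ≤ 4 := by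
    calc Real.sqrt (Real.pi / (1/4)) ≤ Real.sqrt 16 := Real.sqrt_le_sqrt h16
      _ = 4 := by
          rw [show (16:ℝ) = 4^2 by norm_num, Real.sqrt_sq (by norm_num : (0:ℝ) ≤ 4)]
  rw [h2, h3] at h1
  linarith

lemma cont_G (c : ℂ) : Continuous (fun t : ℝ => Complex.exp (-(c - (t:ℂ))^2/2)) := by
  fun_prop

lemma intOn_G (c : ℂ) (s : Set ℝ) :
    IntegrableOn (fun t : ℝ => Complex.exp (-(c - (t:ℂ))^2/2)) s := by
  apply Integrable.mono' (((gauss_int c.re).const_mul (Real.exp (c.im^2/2))).integrableOn)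
    ((cont_G c).aestronglyMeasurable)
  exact ae_of_all _ fun t => bound1 c t

lemma intOn_aG (c : ℂ) (s : Set ℝ) :
    IntegrableOn (fun t : ℝ => ((c.re : ℂ) - (t:ℂ)) * Complex.exp (-(c - (t:ℂ))^2/2)) s := by
  apply Integrable.mono' (((gauss_int c.re).const_mul (Real.exp (c.im^2/2))).integrableOn)
  · apply Continuous.aestronglyMeasurable; fun_prop
  · exact ae_of_all _ fun t => bound2 c t

lemma intOn_cG (c : ℂ) (s : Set ℝ) :
    IntegrableOn (fun t : ℝ => (c - (t:ℂ)) * Complex.exp (-(c - (t:ℂ))^2/2)) s := by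
  apply Integrable.mono'
    (((gauss_int c.re).const_mul (Real.exp (c.im^2/2))).integrableOn.const_mul (1 + |c.im|))
  · apply Continuous.aestronglyMeasurable; fun_prop
  · refine ae_of_all _ fun t => ?_
    calc ‖(c - (t:ℂ)) * Complex.exp (-(c - (t:ℂ))^2/2)‖
        ≤ (1 + |c.im|) * (Real.exp (c.im^2/2) * Real.exp (-(1/4) * (c.re - t)^2)) := bound3 c t
      _ = (1 + |c.im|) * (Real.exp (c.im^2/2) * Real.exp (-(1/4) * (c.re - t)^2)) := rfl

lemma hasDeriv_G (c : ℂ) (x : ℝ) :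
    HasDerivAt (fun t : ℝ => Complex.exp (-(c - (t:ℂ))^2/2))
      ((c - (x:ℂ)) * Complex.exp (-(c - (x:ℂ))^2/2)) x := by
  have h0 : HasDerivAt (fun u : ℂ => c - u) (-1) (x:ℂ) := (hasDerivAt_id _).const_sub c
  have h1 : HasDerivAt (fun u : ℂ => -(c - u)^2/2) (c - (x:ℂ)) (x:ℂ) := by
    have h2 := ((h0.pow 2).neg).div_const 2
    exact h2.congr_deriv (by ring)
  have h3 := h1.cexp
  have h4 : HasDerivAt (fun u : ℂ => Complex.exp (-(c - u)^2/2))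
      ((c - (x:ℂ)) * Complex.exp (-(c - (x:ℂ))^2/2)) (x:ℂ) := by
    exact h3.congr_deriv (by ring)
  exact h4.comp_ofReal

lemma tendsto_G (c : ℂ) :
    Tendsto (fun t : ℝ => Complex.exp (-(c - (t:ℂ))^2/2)) atBot (𝓝 0) := by
  rw [tendsto_zero_iff_norm_tendsto_zero]
  have heq : (fun t : ℝ => ‖Complex.exp (-(c - (t:ℂ))^2/2)‖)
      = fun t : ℝ => Real.exp ((c.im^2 - (c.re - t)^2)/2) := funext fun t => norm_G c t
  rw [heq]
  apply Real.tendsto_exp_atBot.comp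
  have h1 : Tendsto (fun t : ℝ => c.re - t) atBot atTop :=
    tendsto_atTop_add_const_left _ c.re tendsto_neg_atBot_atTop
  have h2 : Tendsto (fun t : ℝ => (c.re - t)^2) atBot atTop := by
    have := h1.atTop_mul_atTop₀ h1
    simpa [pow_two] using this
  have h3 : Tendsto (fun t : ℝ => c.im^2 - (c.re - t)^2) atBot atBot :=
    tendsto_atBot_add_const_left _ _ (tendsto_neg_atTop_atBot.comp h2)
  have h4 : Tendsto (fun t : ℝ => (c.im^2 - (c.re - t)^2)/2) atBot atBot :=
    h3.atBot_div_const (by norm_num)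
  exact h4

lemma keyJ (c : ℂ) :
    (1 + |c.im|) * ‖∫ t in Iio (0:ℝ), Complex.exp (-(c - (t:ℂ))^2/2)‖
      ≤ 9 * Real.exp (c.im^2/2) := by
  set E := Real.exp (c.im^2/2) with hE
  set J := ∫ t in Iio (0:ℝ), Complex.exp (-(c - (t:ℂ))^2/2) with hJdef
  have hEpos : 0 < E := Real.exp_pos _
  -- ‖J‖ ≤ 4E
  have hJ : ‖J‖ ≤ 4 * E := by
    calc ‖J‖ ≤ ∫ t in Iio (0:ℝ), ‖Complex.exp (-(c - (t:ℂ))^2/2)‖ :=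
          norm_integral_le_integral_norm _
      _ ≤ ∫ t in Iio (0:ℝ), E * Real.exp (-(1/4) * (c.re - t)^2) := by
          apply integral_mono (intOn_G c _).norm
            (((gauss_int c.re).const_mul E).integrableOn)
          exact fun t => bound1 c t
      _ = E * ∫ t in Iio (0:ℝ), Real.exp (-(1/4) * (c.re - t)^2) := by
          rw [integral_const_mul]
      _ ≤ E * 4 := by
          exact mul_le_mul_of_nonneg_left (gauss_integral_le c.re) hEpos.le
      _ = 4 * E := by ring
  -- FTC
  have hFTC : (∫ t in Iic (0:ℝ), (c - (t:ℂ)) * Complex.exp (-(c - (t:ℂ))^2/2))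
      = Complex.exp (-(c - ((0:ℝ):ℂ))^2/2) := by
    have := integral_Iic_of_hasDerivAt_of_tendsto' (a := 0)
      (fun x _ => hasDeriv_G c x) (intOn_cG c _) (tendsto_G c)
    simpa using this
  -- split: I*b*J = G(0) - ∫ (a - t) G
  have hsplit : (Complex.I * (c.im : ℂ)) * J
      = Complex.exp (-(c - ((0:ℝ):ℂ))^2/2)
        - ∫ t in Iio (0:ℝ), ((c.re : ℂ) - (t:ℂ)) * Complex.exp (-(c - (t:ℂ))^2/2) := by
    have hpt : ∀ t : ℝ, (c - (t:ℂ)) * Complex.exp (-(c - (t:ℂ))^2/2)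
        = (Complex.I * (c.im : ℂ)) * Complex.exp (-(c - (t:ℂ))^2/2)
          + ((c.re : ℂ) - (t:ℂ)) * Complex.exp (-(c - (t:ℂ))^2/2) := by
      intro t
      have hc : (c.re : ℂ) + (c.im : ℂ) * Complex.I = c := Complex.re_add_im c
      linear_combination -Complex.exp (-(c - (t:ℂ))^2/2) * hc
    have h1 : (∫ t in Iio (0:ℝ), (c - (t:ℂ)) * Complex.exp (-(c - (t:ℂ))^2/2))
        = (Complex.I * (c.im : ℂ)) * J
          + ∫ t in Iio (0:ℝ), ((c.re : ℂ) - (t:ℂ)) * Complex.exp (-(c - (t:ℂ))^2/2) := by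
      rw [hJdef, ← integral_const_mul, ← integral_add
        (((intOn_G c _).const_mul _)) (intOn_aG c _)]
      exact setIntegral_congr_fun measurableSet_Iio fun t _ => hpt t
    have h2 : (∫ t in Iio (0:ℝ), (c - (t:ℂ)) * Complex.exp (-(c - (t:ℂ))^2/2))
        = Complex.exp (-(c - ((0:ℝ):ℂ))^2/2) := by
      rw [← integral_Iic_eq_integral_Iio]; exact hFTC
    rw [h2] at h1
    linear_combination -h1
  -- |b| ‖J‖ ≤ 5E
  have hbJ : |c.im| * ‖J‖ ≤ 5 * E := by
    have hnorm : ‖(Complex.I * (c.im : ℂ)) * J‖ = |c.im| * ‖J‖ := by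
      rw [norm_mul, norm_mul, Complex.norm_I, one_mul, Complex.norm_real, Real.norm_eq_abs]
    have hG0 : ‖Complex.exp (-(c - ((0:ℝ):ℂ))^2/2)‖ ≤ E := by
      rw [norm_G]
      apply Real.exp_le_exp.2
      nlinarith [sq_nonneg (c.re - 0)]
    have hI2 : ‖∫ t in Iio (0:ℝ), ((c.re : ℂ) - (t:ℂ)) * Complex.exp (-(c - (t:ℂ))^2/2)‖
        ≤ 4 * E := by
      calc ‖∫ t in Iio (0:ℝ), ((c.re : ℂ) - (t:ℂ)) * Complex.exp (-(c - (t:ℂ))^2/2)‖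
          ≤ ∫ t in Iio (0:ℝ), ‖((c.re : ℂ) - (t:ℂ)) * Complex.exp (-(c - (t:ℂ))^2/2)‖ :=
            norm_integral_le_integral_norm _
        _ ≤ ∫ t in Iio (0:ℝ), E * Real.exp (-(1/4) * (c.re - t)^2) := by
            apply integral_mono (intOn_aG c _).norm
              (((gauss_int c.re).const_mul E).integrableOn)
            exact fun t => bound2 c t
        _ = E * ∫ t in Iio (0:ℝ), Real.exp (-(1/4) * (c.re - t)^2) := by
            rw [integral_const_mul]
        _ ≤ E * 4 := mul_le_mul_of_nonneg_left (gauss_integral_le c.re) hEpos.le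
        _ = 4 * E := by ring
    calc |c.im| * ‖J‖ = ‖(Complex.I * (c.im : ℂ)) * J‖ := hnorm.symm
      _ = ‖Complex.exp (-(c - ((0:ℝ):ℂ))^2/2)
            - ∫ t in Iio (0:ℝ), ((c.re : ℂ) - (t:ℂ)) * Complex.exp (-(c - (t:ℂ))^2/2)‖ := by
          rw [hsplit]
      _ ≤ ‖Complex.exp (-(c - ((0:ℝ):ℂ))^2/2)‖
            + ‖∫ t in Iio (0:ℝ), ((c.re : ℂ) - (t:ℂ)) * Complex.exp (-(c - (t:ℂ))^2/2)‖ :=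
          norm_sub_le _ _
      _ ≤ E + 4 * E := add_le_add hG0 hI2
      _ = 5 * E := by ring
  have hnJ : (0:ℝ) ≤ ‖J‖ := norm_nonneg _
  nlinarith [hJ, hbJ]

/-- Uniform off-diagonal decay of the erfc-kernels:
`|K_l(z,w)| ≤ C e^{-(Re(z-w))²/2} / (1 + |Im(z-w)|)`. -/
theorem erfcKernel_decay :
    ∃ C > (0 : ℝ), ∀ (l : ℝ) (z w : ℂ),
      ‖erfcKernel l z w‖ ≤
        C * Real.exp (-(z - w).re ^ 2 / 2) / (1 + |(z - w).im|) := by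
  refine ⟨9, by norm_num, fun l z w => ?_⟩
  rw [erfcKernel, norm_mul]
  set u := z + (starRingEnd ℂ) w + 2 * (l : ℂ) with hu
  have hb : u.im = (z - w).im := by
    simp [hu, Complex.add_im, Complex.sub_im, Complex.conj_im, Complex.mul_im]
    ring
  have hGin : ‖Ginibre z w‖ = Real.exp (-(z-w).re^2/2 - (z-w).im^2/2) := by
    rw [Ginibre, Complex.norm_exp]
    congr 1
    simp [Complex.sub_re, Complex.mul_re, Complex.conj_re, Complex.conj_im,
      Complex.div_re, Complex.normSq_apply, Complex.sq_norm,
      Complex.sub_im]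
    ring
  have hFnorm : ‖erfcF u‖ ≤ ‖∫ t in Iio (0:ℝ), Complex.exp (-(u - (t:ℂ))^2/2)‖ := by
    rw [erfcF, norm_mul]
    have h1 : ‖((Real.sqrt (2*Real.pi) : ℝ) : ℂ)⁻¹‖ ≤ 1 := by
      rw [norm_inv, Complex.norm_real, Real.norm_eq_abs,
        _root_.abs_of_nonneg (Real.sqrt_nonneg _)]
      have hge : (1:ℝ) ≤ Real.sqrt (2*Real.pi) := by
        rw [show (1:ℝ) = Real.sqrt 1 by simp]
        apply Real.sqrt_le_sqrt
        nlinarith [Real.pi_gt_three]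
      exact inv_le_one_of_one_le₀ hge
    calc ‖((Real.sqrt (2*Real.pi) : ℝ) : ℂ)⁻¹‖ * ‖∫ t in Iio (0:ℝ), Complex.exp (-(u - (t:ℂ))^2/2)‖
        ≤ 1 * ‖∫ t in Iio (0:ℝ), Complex.exp (-(u - (t:ℂ))^2/2)‖ :=
          mul_le_mul_of_nonneg_right h1 (norm_nonneg _)
      _ = _ := one_mul _
  have hpos : (0:ℝ) < 1 + |(z-w).im| := by positivity
  have hkey := keyJ u
  rw [hb] at hkey
  have hJle : ‖∫ t in Iio (0:ℝ), Complex.exp (-(u - (t:ℂ))^2/2)‖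
      ≤ 9 * Real.exp ((z-w).im^2/2) / (1 + |(z-w).im|) := by
    rw [le_div_iff₀ hpos, mul_comm]
    exact hkey
  have hF2 : ‖erfcF u‖ ≤ 9 * Real.exp ((z-w).im^2/2) / (1 + |(z-w).im|) :=
    hFnorm.trans hJle
  have heq : Real.exp (-(z-w).re^2/2 - (z-w).im^2/2)
      * (9 * Real.exp ((z-w).im^2/2) / (1 + |(z-w).im|))
      = 9 * Real.exp (-(z-w).re^2/2) / (1 + |(z-w).im|) := by
    rw [show -(z-w).re^2/2 - (z-w).im^2/2 = (-(z-w).re^2/2) + -((z-w).im^2/2) by ring,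
      Real.exp_add, Real.exp_neg]
    have hne := Real.exp_ne_zero ((z-w).im^2/2)
    field_simp
  calc ‖Ginibre z w‖ * ‖erfcF u‖
      ≤ Real.exp (-(z-w).re^2/2 - (z-w).im^2/2)
        * (9 * Real.exp ((z-w).im^2/2) / (1 + |(z-w).im|)) := by
        rw [hGin]
        exact mul_le_mul_of_nonneg_left hF2 (Real.exp_pos _).le
    _ = 9 * Real.exp (-(z-w).re^2/2) / (1 + |(z-w).im|) := heq
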